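/- Let β ∈ ((1+√5)/2, 2). The intervals D_n = T_1^{-n}(S), n ≥ 1, are pairwise disjoint and contained in (1/(β(β−1)), 1/(β−1)), where T_1(x) = βx − 1 and S = [1/β, 1/(β(β−1))]. -/

import Mathlib

def T1 (β x : ℝ) : ℝ := β * x - 1

def Dset (β : ℝ) (n : ℕ) : Set ℝ := (T1 β)^[n] ⁻¹' Set.Icc (1/β) (1/(β*(β-1)))

lemma T1_iter_eq (β : ℝ) (hβ : β - 1 ≠ 0) (n : ℕ) (x : ℝ) :
    (T1 β)^[n] x = β^n * (x - 1/(β-1)) + 1/(β-1) := by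
  induction n with
  | zero => simp
  | succ n ih =>
    rw [Function.iterate_succ_apply', ih, T1]
    field_simp
    ring

theorem Dn_disjoint_and_right (β : ℝ) (hβ : β ∈ Set.Ioo ((1 + Real.sqrt 5)/2) 2) :
    (∀ n : ℕ, 1 ≤ n → Dset β n ⊆ Set.Ioo (1/(β*(β-1))) (1/(β-1))) ∧
    (∀ m n : ℕ, 1 ≤ m → 1 ≤ n → m ≠ n → Disjoint (Dset β m) (Dset β n)) := by
  obtain ⟨hβl, hβr⟩ := hβ
  have hs5 : (2:ℝ) < Real.sqrt 5 := by
    nlinarith [Real.sq_sqrt (show (0:ℝ) ≤ 5 by norm_num), Real.sqrt_nonneg 5]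
  have hb1 : (3:ℝ)/2 < β := by linarith
  have hb0 : (0:ℝ) < β := by linarith
  have hu : (0:ℝ) < β - 1 := by linarith
  have hu' : β - 1 ≠ 0 := ne_of_gt hu
  have hq : β + 1 < β^2 := by
    have h5 : Real.sqrt 5 ^ 2 = 5 := Real.sq_sqrt (by norm_num)
    nlinarith [Real.sqrt_nonneg 5]
  -- abbreviations
  have hcp : 1/(β*(β-1)) - 1/(β-1) = -(1/β) := by field_simp; ring
  have h1p : 1/β - 1/(β-1) = -(1/(β*(β-1))) := by field_simp; ring
  have hc0 : (0:ℝ) < 1/(β*(β-1)) := by positivity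
  have hb' : (0:ℝ) < 1/β := by positivity
  -- membership characterization
  have hmem : ∀ n x, x ∈ Dset β n →
      1/β ≤ β^n * (x - 1/(β-1)) + 1/(β-1) ∧
      β^n * (x - 1/(β-1)) + 1/(β-1) ≤ 1/(β*(β-1)) := by
    intro n x hx
    simpa [Dset, T1_iter_eq β hu' n x] using hx
  constructor
  · intro n hn x hx
    obtain ⟨h1, h2⟩ := hmem n x hx
    have hP0 : (0:ℝ) < β^n := pow_pos hb0 n
    have hPb : β ≤ β^n := by
      calc β = β^1 := (pow_one β).symm
      _ ≤ β^n := pow_le_pow_right₀ (by linarith) hn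
    have hxp : x < 1/(β-1) := by
      by_contra h
      push_neg at h
      have h0 : 0 ≤ β^n * (x - 1/(β-1)) := mul_nonneg hP0.le (by linarith)
      linarith
    constructor
    · -- 1/(β*(β-1)) < x
      by_contra h
      push_neg at h
      -- β^n * (p - x) ≤ c  from h1
      have k1 : β^n * (1/(β-1) - x) ≤ 1/(β*(β-1)) := by nlinarith
      have k2 : β * (1/(β-1) - x) ≤ β^n * (1/(β-1) - x) :=
        mul_le_mul_of_nonneg_right hPb (by linarith)
      have k3 : β * x ≤ β * (1/(β*(β-1))) := mul_le_mul_of_nonneg_left h hb0.le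
      have hfrac : β * (1/(β-1)) - (1+β)*(1/(β*(β-1))) = (β^2 - β - 1)/(β*(β-1)) := by
        field_simp; ring
      have hfpos : 0 < (β^2 - β - 1)/(β*(β-1)) := by
        apply div_pos (by linarith) (by positivity)
      nlinarith
    · exact hxp
  · -- disjointness
    have aux : ∀ m n : ℕ, 1 ≤ m → m < n → Disjoint (Dset β m) (Dset β n) := by
      intro m n hm hmn
      rw [Set.disjoint_left]
      intro x hxm hxn
      obtain ⟨hm1, hm2⟩ := hmem m x hxm
      obtain ⟨hn1, hn2⟩ := hmem n x hxn
      have hPm : (0:ℝ) < β^m := pow_pos hb0 m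
      have hPn : (0:ℝ) < β^n := pow_pos hb0 n
      -- β^m (p - x) ≥ 1/β
      have k1 : 1/β ≤ β^m * (1/(β-1) - x) := by nlinarith
      -- β^n (p - x) ≤ c
      have k2 : β^n * (1/(β-1) - x) ≤ 1/(β*(β-1)) := by nlinarith
      have hsplit : β^n * (1/(β-1) - x) = β^(n-m) * (β^m * (1/(β-1) - x)) := by
        rw [← mul_assoc, ← pow_add]
        congr 2
        omega
      have hPnm : β ≤ β^(n-m) := by
        calc β = β^1 := (pow_one β).symm
        _ ≤ β^(n-m) := pow_le_pow_right₀ (by linarith) (by omega)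
      have k3 : β * (1/β) ≤ β^(n-m) * (β^m * (1/(β-1) - x)) := by
        apply mul_le_mul hPnm k1 hb'.le (by linarith)
      have k4 : β * (1/β) = 1 := mul_one_div_cancel (ne_of_gt hb0)
      -- c < 1
      have hc1 : 1/(β*(β-1)) < 1 := by
        rw [div_lt_one (by positivity)]
        nlinarith
      linarith [hsplit ▸ k2]
    intro m n hm hn hmn
    rcases lt_or_gt_of_ne hmn with h | h
    · exact aux m n hm h
    · exact (aux n m hn h).symm
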